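/- The crystal-spinor selection rule for deletion of C from a dinucleotide: modeling the deletion C-X → X as the component τ^{1/2}_{−1/2} ⊕ τ^{1/2}_{−1/2} acting between the sl(2)⊕sl(2) crystal representation of the dinucleotide and the fundamental (1/2,1/2), the transition is allowed in both factors (i.e., the V-component m-selection δ_{m₁,j₁−α} + δ_{−m,j−α} − δδ of the q→0 Wigner–Eckart rule is satisfied for both H and V) exactly for the dinucleotide CA, among CC, CU, CG, CA. -/

import Mathlib

/-- The `q → 0` Wigner–Eckart selection rule for a spinor crystal tensor
operator `τ^{1/2}_m` on one `sl(2)` factor: the transition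
`|j₁, m₁⟩ → |j_f, m_f⟩` is allowed iff there is `α ∈ {0,1}` with
`j_f = j₁ + 1/2 − α`, `m_f = m₁ + m`, and `m₁ = j₁ − α` or `−m = 1/2 − α`. -/
def Allowed (j₁ m₁ jf mf m : ℚ) : Prop :=
  ∃ α : ℚ, (α = 0 ∨ α = 1) ∧ jf = j₁ + 1/2 - α ∧ mf = m₁ + m ∧
    (m₁ = j₁ - α ∨ -m = 1/2 - α)

/-- Modeling the deletion C-X → X by `τ^{1/2}_{−1/2,H} ⊕ τ^{1/2}_{−1/2,V}`:
among CC → C, CU → U, CG → G, CA → A (with the dinucleotides lying in the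
representations (1,1), (0,1), (1,0), (0,0) with `(J_{H,3}, J_{V,3})` values
(1,1), (0,1), (1,0), (0,0), and the final nucleotides lying in (1/2,1/2) with
C = (1/2,1/2), U = (−1/2,1/2), G = (1/2,−1/2), A = (−1/2,−1/2)), the pattern is
CC: F–F, CU: A–F, CG: F–A, CA: A–A; hence only CA is allowed in both factors. -/
theorem deletion_of_C_selection_rule :
    -- CC → C : forbidden horizontally and vertically
    (¬ Allowed 1 1 (1/2) (1/2) (-1/2)) ∧ (¬ Allowed 1 1 (1/2) (1/2) (-1/2)) ∧
    -- CU → U : allowed horizontally, forbidden vertically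
    (Allowed 0 0 (1/2) (-1/2) (-1/2)) ∧ (¬ Allowed 1 1 (1/2) (1/2) (-1/2)) ∧
    -- CG → G : forbidden horizontally, allowed vertically
    (¬ Allowed 1 1 (1/2) (1/2) (-1/2)) ∧ (Allowed 0 0 (1/2) (-1/2) (-1/2)) ∧
    -- CA → A : allowed horizontally and vertically
    (Allowed 0 0 (1/2) (-1/2) (-1/2)) ∧ (Allowed 0 0 (1/2) (-1/2) (-1/2)) := by
  have hA : Allowed 0 0 (1/2) (-1/2) (-1/2) := ⟨0, Or.inl rfl, by norm_num, by norm_num, Or.inl (by norm_num)⟩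
  have hF : ¬ Allowed 1 1 (1/2) (1/2) (-1/2) := by
    rintro ⟨α, hα | hα, h1, h2, h3 | h3⟩ <;> subst hα <;> norm_num at h1 <;> norm_num at h3
  exact ⟨hF, hF, hA, hF, hF, hA, hA, hA⟩
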